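/- arXiv:2602.18937 — 3 statements merged into one kernel-verified Lean document; each statement's English description precedes it below -/
import Mathlib

section
/- Let n, k be positive natural numbers with k ≤ n, and let J_n = [[0, I_n], [-I_n, 0]] ∈ ℝ^{2n×2n} and J_k = [[0, I_k], [-I_k, 0]] ∈ ℝ^{2k×2k}. If S ∈ ℝ^{2n×2k} has J-orthogonal columns (Sᵀ J_n S = J_k) and H ∈ ℝ^{2n×2n} is Hamiltonian (H J_n = (H J_n)ᵀ), then the projected matrix (J_kᵀ Sᵀ J_n) H S ∈ ℝ^{2k×2k} is Hamiltonian, i.e., ((J_kᵀ Sᵀ J_n) H S) J_k = (((J_kᵀ Sᵀ J_n) H S) J_k)ᵀ. -/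
open Matrix

/-- `J m = [[0, Iₘ], [-Iₘ, 0]]`, the canonical skew-symmetric matrix. -/
def Jmat (m : ℕ) : Matrix (Fin m ⊕ Fin m) (Fin m ⊕ Fin m) ℝ :=
  Matrix.fromBlocks 0 1 (-1) 0

lemma Jmat_transpose (m : ℕ) : (Jmat m)ᵀ = -Jmat m := by
  ext (i|i) (j|j) <;> simp [Jmat, Matrix.fromBlocks, Matrix.transpose_apply, Matrix.one_apply, eq_comm]

lemma Jmat_mul_self (m : ℕ) : Jmat m * Jmat m = -1 := by
  have h : Jmat m * Jmat m = Matrix.fromBlocks (-1) 0 0 (-1) := by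
    simp [Jmat, Matrix.fromBlocks_multiply]
  rw [h]
  ext (i|i) (j|j) <;> simp [Matrix.fromBlocks, Matrix.one_apply]

/-- If `S ∈ ℝ^{2n×2k}` has `J`-orthogonal columns and `H ∈ ℝ^{2n×2n}` is
Hamiltonian, then the projected matrix `(Jₖᵀ Sᵀ Jₙ) H S` is Hamiltonian. -/
theorem projected_matrix_hamiltonian (n k : ℕ) (hn : 0 < n) (hk : 0 < k) (hkn : k ≤ n)
    (S : Matrix (Fin n ⊕ Fin n) (Fin k ⊕ Fin k) ℝ)
    (H : Matrix (Fin n ⊕ Fin n) (Fin n ⊕ Fin n) ℝ)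
    (hS : Sᵀ * Jmat n * S = Jmat k)
    (hHam : H * Jmat n = (H * Jmat n)ᵀ) :
    (((Jmat k)ᵀ * Sᵀ * Jmat n) * H * S) * Jmat k
      = ((((Jmat k)ᵀ * Sᵀ * Jmat n) * H * S) * Jmat k)ᵀ := by
  have hsym : Jmat n * H = (Jmat n * H)ᵀ := by
    have h1 : Jmat n * (H * Jmat n) * Jmat n = Jmat n * (Jmat n)ᵀ * Hᵀ * Jmat n := by
      rw [hHam, Matrix.transpose_mul]; noncomm_ring
    rw [Jmat_transpose] at h1
    have h2 : Jmat n * (H * Jmat n) * Jmat n = -(Jmat n * H) := by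
      rw [← Matrix.mul_assoc, Matrix.mul_assoc (Jmat n * H), Jmat_mul_self]
      noncomm_ring
    have h3 : Jmat n * -Jmat n * Hᵀ * Jmat n = Hᵀ * Jmat n := by
      rw [Matrix.mul_neg, Jmat_mul_self]; noncomm_ring
    rw [h2, h3] at h1
    rw [Matrix.transpose_mul, Jmat_transpose, Matrix.mul_neg, ← h1, neg_neg]
  have hsym' : Hᵀ * (Jmat n)ᵀ = Jmat n * H := by
    rw [← Matrix.transpose_mul, ← hsym]
  calc (((Jmat k)ᵀ * Sᵀ * Jmat n) * H * S) * Jmat k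
      = (Jmat k)ᵀ * (Sᵀ * ((Jmat n * H) * (S * Jmat k))) := by simp only [Matrix.mul_assoc]
    _ = (Jmat k)ᵀ * (Sᵀ * ((Hᵀ * (Jmat n)ᵀ) * (S * Jmat k))) := by rw [hsym']
    _ = ((((Jmat k)ᵀ * Sᵀ * Jmat n) * H * S) * Jmat k)ᵀ := by
        simp only [Matrix.transpose_mul, Matrix.transpose_transpose,
          Matrix.mul_assoc]
end

section
/- Let n be a positive natural number, let A ∈ ℝ^{n×n}, let b ∈ ℝ^n, and define φ(A) = Σ_{k≥0} A^k / (k+1)! ∈ ℝ^{n×n}. Let Â ∈ ℝ^{(n+1)×(n+1)} be the block matrix [[A, b], [0, 0]] (i.e., the top-left n×n block is A, the top-right n×1 block is b, and the last row is zero). Then the matrix exponential of Â has the block form exp(Â) = [[exp(A), φ(A) b], [0, 1]]; in particular, the top-right n×1 block of exp(Â) equals φ(A) b. -/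
open Matrix

/-- `φ(A) = Σ_{k≥0} Aᵏ/(k+1)!`, the matrix version of `φ(z) = (eᶻ - 1)/z`. -/
noncomputable def phiMat (n : ℕ) (A : Matrix (Fin n) (Fin n) ℝ) :
    Matrix (Fin n) (Fin n) ℝ :=
  ∑' k : ℕ, ((k + 1).factorial : ℝ)⁻¹ • A ^ k

section aux

variable {n : ℕ}

lemma hatA_pow_succ (A : Matrix (Fin n) (Fin n) ℝ) (B : Matrix (Fin n) Unit ℝ) (k : ℕ) :
    (Matrix.fromBlocks A B 0 0 : Matrix (Fin n ⊕ Unit) (Fin n ⊕ Unit) ℝ) ^ (k + 1)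
      = Matrix.fromBlocks (A ^ (k + 1)) (A ^ k * B) 0 0 := by
  induction k with
  | zero => simp
  | succ k ih =>
    rw [pow_succ', ih, Matrix.fromBlocks_multiply]
    simp [pow_succ', Matrix.mul_assoc]

lemma hasSum_fromBlocks {f : ℕ → Matrix (Fin n) (Fin n) ℝ}
    {a : Matrix (Fin n) (Fin n) ℝ} {h : ℕ → Matrix (Fin n) Unit ℝ} {c : Matrix (Fin n) Unit ℝ}
    (hf : HasSum f a) (hh : HasSum h c) :
    HasSum
      (fun k => (Matrix.fromBlocks (f k) (h k) 0 0 : Matrix (Fin n ⊕ Unit) (Fin n ⊕ Unit) ℝ))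
      (Matrix.fromBlocks a c 0 0) := by
  have e1 : ∀ (X : Matrix (Fin n) (Fin n) ℝ) (Y : Matrix (Fin n) Unit ℝ),
      (Matrix.fromBlocks X Y 0 0 : Matrix (Fin n ⊕ Unit) (Fin n ⊕ Unit) ℝ)
        = Matrix.fromBlocks X 0 0 0 + Matrix.fromBlocks 0 Y 0 0 := by
    intro X Y; rw [Matrix.fromBlocks_add]; simp
  have m1 : HasSum (fun k => (Matrix.fromBlocks (f k) 0 0 0 :
      Matrix (Fin n ⊕ Unit) (Fin n ⊕ Unit) ℝ)) (Matrix.fromBlocks a 0 0 0) := by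
    refine hf.map (⟨⟨fun X => Matrix.fromBlocks X 0 0 0, by simp⟩, fun X Y => by
      simp [Matrix.fromBlocks_add]⟩ : Matrix (Fin n) (Fin n) ℝ →+ _) ?_
    exact Continuous.matrix_fromBlocks continuous_id continuous_const continuous_const
      continuous_const
  have m2 : HasSum (fun k => (Matrix.fromBlocks 0 (h k) 0 0 :
      Matrix (Fin n ⊕ Unit) (Fin n ⊕ Unit) ℝ)) (Matrix.fromBlocks 0 c 0 0) := by
    refine hh.map (⟨⟨fun Y => Matrix.fromBlocks 0 Y 0 0, by simp⟩, fun X Y => by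
      simp [Matrix.fromBlocks_add]⟩ : Matrix (Fin n) Unit ℝ →+ _) ?_
    exact Continuous.matrix_fromBlocks continuous_const continuous_id continuous_const
      continuous_const
  simpa only [← e1] using m1.add m2

end aux

/-- For `Â = [[A, b], [0, 0]]` we have `exp(Â) = [[exp(A), φ(A)b], [0, 1]]`;
in particular the top-right block of `exp(Â)` is `φ(A) b`. -/
theorem exp_block_matrix_phi (n : ℕ) (hn : 0 < n)
    (A : Matrix (Fin n) (Fin n) ℝ) (b : Fin n → ℝ) :
    NormedSpace.exp
        (Matrix.fromBlocks A (Matrix.of fun i (_ : Unit) => b i) 0 0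
          : Matrix (Fin n ⊕ Unit) (Fin n ⊕ Unit) ℝ)
      = Matrix.fromBlocks (NormedSpace.exp A)
          (Matrix.of fun i (_ : Unit) => (phiMat n A *ᵥ b) i) 0 1 := by
  letI : SeminormedRing (Matrix (Fin n) (Fin n) ℝ) := Matrix.linftyOpSemiNormedRing
  letI : NormedRing (Matrix (Fin n) (Fin n) ℝ) := Matrix.linftyOpNormedRing
  letI : NormedAlgebra ℝ (Matrix (Fin n) (Fin n) ℝ) := Matrix.linftyOpNormedAlgebra
  set B : Matrix (Fin n) Unit ℝ := Matrix.of fun i (_ : Unit) => b i with hB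
  set Ahat : Matrix (Fin n ⊕ Unit) (Fin n ⊕ Unit) ℝ := Matrix.fromBlocks A B 0 0 with hAhat
  have h1 : HasSum (fun k : ℕ => ((k.factorial : ℝ))⁻¹ • A ^ k) (NormedSpace.exp A) :=
    NormedSpace.exp_series_hasSum_exp' A
  have hnorm : Summable fun k : ℕ => ‖((k.factorial : ℝ))⁻¹ • A ^ k‖ := h1.summable.norm
  have hsum : Summable (fun k : ℕ => (((k + 1).factorial : ℝ))⁻¹ • A ^ k) := by
    refine Summable.of_norm_bounded hnorm fun k => ?_
    simp only [norm_smul, norm_inv, Real.norm_natCast]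
    have h1le : ((k.factorial : ℝ))⁻¹⁻¹ ≤ (((k + 1).factorial : ℝ))⁻¹⁻¹ := by
      rw [inv_inv, inv_inv]; exact_mod_cast Nat.factorial_le (Nat.le_succ k)
    refine mul_le_mul_of_nonneg_right ?_ (norm_nonneg _)
    exact inv_anti₀ (by positivity) (by exact_mod_cast Nat.factorial_le (Nat.le_succ k))
  have h2 : HasSum (fun k : ℕ => (((k + 1).factorial : ℝ))⁻¹ • A ^ k) (phiMat n A) :=
    hsum.hasSum
  have h1' : HasSum (fun k : ℕ => (((k + 1).factorial : ℝ))⁻¹ • A ^ (k + 1))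
      (NormedSpace.exp A - 1) := by
    have h1'' := (hasSum_nat_add_iff' (f := fun k : ℕ => ((k.factorial : ℝ))⁻¹ • A ^ k) 1).mpr h1
    simpa using h1''
  have h2' : HasSum (fun k : ℕ => ((((k + 1).factorial : ℝ))⁻¹ • A ^ k) * B)
      (phiMat n A * B) := by
    refine h2.map (⟨⟨fun X => X * B, Matrix.zero_mul B⟩, fun X Y => Matrix.add_mul X Y B⟩ :
      Matrix (Fin n) (Fin n) ℝ →+ Matrix (Fin n) Unit ℝ) ?_
    exact Continuous.matrix_mul continuous_id continuous_const
  have hshift : HasSum (fun k : ℕ => (((k + 1).factorial : ℝ))⁻¹ • Ahat ^ (k + 1))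
      (Matrix.fromBlocks (NormedSpace.exp A - 1) (phiMat n A * B) 0 0) := by
    have := hasSum_fromBlocks h1' h2'
    refine HasSum.congr_fun this fun k => ?_
    rw [hatA_pow_succ, Matrix.fromBlocks_smul, Matrix.smul_mul]
    simp
  have hcol : (Matrix.of fun i (_ : Unit) => (phiMat n A *ᵥ b) i) = phiMat n A * B := by
    ext i j
    simp [Matrix.mul_apply, Matrix.mulVec, dotProduct, hB]
  have key : HasSum (fun k : ℕ => ((k.factorial : ℝ))⁻¹ • Ahat ^ k)
      (Matrix.fromBlocks (NormedSpace.exp A)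
        (Matrix.of fun i (_ : Unit) => (phiMat n A *ᵥ b) i) 0 1) := by
    refine (hasSum_nat_add_iff' (f := fun k : ℕ => ((k.factorial : ℝ))⁻¹ • Ahat ^ k) 1).mp ?_
    have hval : Matrix.fromBlocks (NormedSpace.exp A)
          (Matrix.of fun i (_ : Unit) => (phiMat n A *ᵥ b) i) 0 1
        - ∑ i ∈ Finset.range 1, ((i.factorial : ℝ))⁻¹ • Ahat ^ i
        = Matrix.fromBlocks (NormedSpace.exp A - 1) (phiMat n A * B) 0 0 := by
      rw [hcol]
      simp only [Finset.range_one, Finset.sum_singleton, Nat.factorial_zero, Nat.cast_one,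
        inv_one, pow_zero, one_smul]
      rw [← Matrix.fromBlocks_one (l := Fin n) (m := Unit) (α := ℝ), sub_eq_add_neg,
        Matrix.fromBlocks_neg, Matrix.fromBlocks_add]
      simp [sub_eq_add_neg]
    rw [hval]
    exact hshift
  rw [NormedSpace.exp_eq_tsum (𝕂 := ℝ)]
  exact key.tsum_eq
end

section
/- Let N, k be positive natural numbers, let H ∈ ℝ^{N×N}, U ∈ ℝ^{N×k}, Ĥ ∈ ℝ^{k×k}, u ∈ ℝ^N, and h ∈ ℝ, and suppose the Arnoldi-type relation H U = U Ĥ + h u e_kᵀ holds, where e_k ∈ ℝ^k is the k-th standard basis vector. Assume moreover that Ĥ is upper Hessenberg in the strong sense that e_kᵀ Ĥ^j e₁ = 0 for all 0 ≤ j ≤ k - 2, where e₁ ∈ ℝ^k is the first standard basis vector. Then for every 0 ≤ j ≤ k - 1, H^j (U e₁) = U (Ĥ^j e₁). Consequently, for every polynomial p of degree at most k - 1, p(H) (U e₁) = U (p(Ĥ) e₁). -/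
open Matrix

lemma vecMulVec_mulVec' {m n : Type*} [Fintype n] (w : m → ℝ) (v x : n → ℝ) :
    Matrix.vecMulVec w v *ᵥ x = (v ⬝ᵥ x) • w := by
  ext i
  simp [Matrix.vecMulVec, Matrix.mulVec, dotProduct, Finset.mul_sum, mul_comm,
    mul_left_comm]

lemma sum_mulVec' {m n : Type*} [Fintype n] {ι : Type*} (s : Finset ι)
    (A : ι → Matrix m n ℝ) (x : n → ℝ) :
    (∑ i ∈ s, A i) *ᵥ x = ∑ i ∈ s, A i *ᵥ x := by
  ext j
  simp [Matrix.mulVec, dotProduct, Matrix.sum_apply, Finset.sum_mul]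
  rw [Finset.sum_comm]

lemma mulVec_sum' {m n : Type*} [Fintype n] {ι : Type*} (s : Finset ι)
    (A : Matrix m n ℝ) (x : ι → n → ℝ) :
    A *ᵥ (∑ i ∈ s, x i) = ∑ i ∈ s, A *ᵥ x i := by
  ext j
  simp [Matrix.mulVec, dotProduct, Finset.sum_apply, Finset.mul_sum]
  rw [Finset.sum_comm]

/-- If `H U = U Ĥ + h u eₖᵀ` (Arnoldi-type relation) and `eₖᵀ Ĥʲ e₁ = 0` for
`0 ≤ j ≤ k - 2`, then `Hʲ (U e₁) = U (Ĥʲ e₁)` for `0 ≤ j ≤ k - 1`, and hence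
`p(H) (U e₁) = U (p(Ĥ) e₁)` for every polynomial `p` of degree at most `k - 1`. -/
theorem krylov_polynomial_exactness (N k : ℕ) (hN : 0 < N) (hk : 0 < k)
    (H : Matrix (Fin N) (Fin N) ℝ) (U : Matrix (Fin N) (Fin k) ℝ)
    (Hhat : Matrix (Fin k) (Fin k) ℝ) (u : Fin N → ℝ) (h : ℝ)
    (harnoldi : H * U = U * Hhat
      + h • Matrix.vecMulVec u (Pi.single ⟨k - 1, Nat.sub_lt hk one_pos⟩ 1 : Fin k → ℝ))
    (hhess : ∀ j : ℕ, j + 2 ≤ k →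
      (Pi.single ⟨k - 1, Nat.sub_lt hk one_pos⟩ 1 : Fin k → ℝ) ⬝ᵥ
        (Hhat ^ j *ᵥ (Pi.single ⟨0, hk⟩ 1 : Fin k → ℝ)) = 0) :
    (∀ j : ℕ, j + 1 ≤ k →
      H ^ j *ᵥ (U *ᵥ (Pi.single ⟨0, hk⟩ 1 : Fin k → ℝ))
        = U *ᵥ (Hhat ^ j *ᵥ (Pi.single ⟨0, hk⟩ 1 : Fin k → ℝ))) ∧
    (∀ p : Polynomial ℝ, p.natDegree ≤ k - 1 →
      (Polynomial.aeval H p) *ᵥ (U *ᵥ (Pi.single ⟨0, hk⟩ 1 : Fin k → ℝ))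
        = U *ᵥ ((Polynomial.aeval Hhat p) *ᵥ (Pi.single ⟨0, hk⟩ 1 : Fin k → ℝ))) := by
  set e1 : Fin k → ℝ := (Pi.single ⟨0, hk⟩ 1 : Fin k → ℝ)
  set ek : Fin k → ℝ := (Pi.single ⟨k - 1, Nat.sub_lt hk one_pos⟩ 1 : Fin k → ℝ)
  have key : ∀ j : ℕ, j + 1 ≤ k →
      H ^ j *ᵥ (U *ᵥ e1) = U *ᵥ (Hhat ^ j *ᵥ e1) := by
    intro j hj
    induction j with
    | zero => simp
    | succ n ih =>
      have hn : n + 1 ≤ k := by omega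
      have ihn := ih hn
      calc H ^ (n + 1) *ᵥ (U *ᵥ e1) = H *ᵥ (H ^ n *ᵥ (U *ᵥ e1)) := by
            rw [pow_succ', ← Matrix.mulVec_mulVec]
        _ = H *ᵥ (U *ᵥ (Hhat ^ n *ᵥ e1)) := by rw [ihn]
        _ = (H * U) *ᵥ (Hhat ^ n *ᵥ e1) := by rw [Matrix.mulVec_mulVec]
        _ = U *ᵥ (Hhat ^ (n + 1) *ᵥ e1) := by
            rw [harnoldi, Matrix.add_mulVec, Matrix.smul_mulVec,
              vecMulVec_mulVec', hhess n (by omega), zero_smul, smul_zero, add_zero,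
              Matrix.mulVec_mulVec, Matrix.mulVec_mulVec, pow_succ',
              Matrix.mul_assoc]
  refine ⟨key, fun p hp => ?_⟩
  rw [Polynomial.aeval_eq_sum_range, Polynomial.aeval_eq_sum_range,
    sum_mulVec' _ _ _, sum_mulVec' _ _ _, mulVec_sum']
  refine Finset.sum_congr rfl fun i hi => ?_
  rw [Matrix.smul_mulVec, Matrix.smul_mulVec, Matrix.mulVec_smul,
    key i (by simp only [Finset.mem_range] at hi; omega)]
end
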